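/- arXiv:2502.06804 — 3 statements merged into one kernel-verified Lean document; each statement's English description precedes it below -/
import Mathlib

section
/- For every real number r ≥ 0, the number of lattice points in the closed disk of radius r centered at the origin satisfies |C(r) − πr²| < 2√2·π·r + 2π. -/
set_option maxHeartbeats 1000000

open MeasureTheory Set

lemma volume_disk (a : ℝ) (ha : 0 ≤ a) :
    volume {x : ℝ × ℝ | x.1 ^ 2 + x.2 ^ 2 ≤ a ^ 2} = ENNReal.ofReal (Real.pi * a ^ 2) := by
  have hmeas : MeasurableSet {x : ℝ × ℝ | x.1 ^ 2 + x.2 ^ 2 ≤ a ^ 2} :=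
    measurableSet_le (by fun_prop) measurable_const
  have := Complex.volume_preserving_equiv_real_prod.measure_preimage hmeas.nullMeasurableSet
  have hpre : Complex.measurableEquivRealProd ⁻¹' {x : ℝ × ℝ | x.1 ^ 2 + x.2 ^ 2 ≤ a ^ 2}
      = Metric.closedBall (0 : ℂ) a := by
    ext z
    simp only [Set.mem_preimage, Complex.measurableEquivRealProd_apply, Set.mem_setOf_eq,
      Metric.mem_closedBall, Complex.dist_eq, sub_zero]
    have h1 : ‖z‖ ^ 2 = z.re ^ 2 + z.im ^ 2 := by
      rw [Complex.sq_norm, Complex.normSq_apply]; ring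
    constructor
    · intro h; nlinarith [norm_nonneg z]
    · intro h; nlinarith [norm_nonneg z]
  rw [hpre, Complex.volume_closedBall] at this
  rw [← this, ENNReal.ofReal_mul Real.pi_pos.le, mul_comm, ← ENNReal.ofReal_pow ha]
  congr 1
  rw [← NNReal.coe_real_pi, ENNReal.ofReal_coe_nnreal]

/-- the unit square centered at a lattice point -/
def sqr (p : ℤ × ℤ) : Set (ℝ × ℝ) :=
  Set.Ico ((p.1 : ℝ) - 1/2) ((p.1 : ℝ) + 1/2) ×ˢ Set.Ico ((p.2 : ℝ) - 1/2) ((p.2 : ℝ) + 1/2)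

lemma sqr_meas (p : ℤ × ℤ) : MeasurableSet (sqr p) :=
  measurableSet_Ico.prod measurableSet_Ico

lemma sqr_vol (p : ℤ × ℤ) : volume (sqr p) = 1 := by
  rw [sqr, Measure.volume_eq_prod, Measure.prod_prod, Real.volume_Ico, Real.volume_Ico]
  norm_num

lemma sqr_disjoint {p q : ℤ × ℤ} (h : p ≠ q) : Disjoint (sqr p) (sqr q) := by
  rw [Set.disjoint_left]
  rintro ⟨x, y⟩ hx hy
  simp only [sqr, Set.mem_prod, Set.mem_Ico] at hx hy
  apply h
  have h1 : p.1 = q.1 := by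
    have a1 : (p.1 : ℝ) < q.1 + 1 := by linarith [hx.1.1, hy.1.2]
    have a2 : (q.1 : ℝ) < p.1 + 1 := by linarith [hy.1.1, hx.1.2]
    have b1 : p.1 < q.1 + 1 := by exact_mod_cast a1
    have b2 : q.1 < p.1 + 1 := by exact_mod_cast a2
    omega
  have h2 : p.2 = q.2 := by
    have a1 : (p.2 : ℝ) < q.2 + 1 := by linarith [hx.2.1, hy.2.2]
    have a2 : (q.2 : ℝ) < p.2 + 1 := by linarith [hy.2.1, hx.2.2]
    have b1 : p.2 < q.2 + 1 := by exact_mod_cast a1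
    have b2 : q.2 < p.2 + 1 := by exact_mod_cast a2
    omega
  exact Prod.ext h1 h2

lemma sqrt2_mul_bound {u v c : ℝ} (hc : 0 ≤ c) (h : u ^ 2 + v ^ 2 ≤ c ^ 2) :
    |u| + |v| ≤ Real.sqrt 2 * c := by
  have hs : Real.sqrt 2 ^ 2 = 2 := Real.sq_sqrt (by norm_num)
  have h1 : (|u| + |v|) ^ 2 ≤ (Real.sqrt 2 * c) ^ 2 := by
    nlinarith [sq_nonneg (|u| - |v|), sq_abs u, sq_abs v]
  have := Real.sqrt_le_sqrt h1
  rwa [Real.sqrt_sq (by positivity), Real.sqrt_sq (by positivity)] at this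

noncomputable def C (r : ℝ) : ℕ :=
  Nat.card {p : ℤ × ℤ // (p.1 : ℝ) ^ 2 + (p.2 : ℝ) ^ 2 ≤ r ^ 2}

theorem gauss_circle_error_bound (r : ℝ) (hr : 0 ≤ r) :
    |(C r : ℝ) - Real.pi * r ^ 2| < 2 * Real.sqrt 2 * Real.pi * r + 2 * Real.pi := by
  set s2 := Real.sqrt 2 with hs2def
  have hs2 : s2 ^ 2 = 2 := Real.sq_sqrt (by norm_num)
  have hs2nn : 0 ≤ s2 := Real.sqrt_nonneg 2
  have hs2one : 1 ≤ s2 := by nlinarith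
  have hpi := Real.pi_pos
  -- the finite set of lattice points
  set s : Finset (ℤ × ℤ) :=
    ((Finset.Icc (-⌈r⌉) ⌈r⌉) ×ˢ (Finset.Icc (-⌈r⌉) ⌈r⌉)).filter
      (fun p => (p.1 : ℝ) ^ 2 + (p.2 : ℝ) ^ 2 ≤ r ^ 2) with hsdef
  have hmem : ∀ p : ℤ × ℤ, p ∈ s ↔ (p.1 : ℝ) ^ 2 + (p.2 : ℝ) ^ 2 ≤ r ^ 2 := by
    intro p
    simp only [hsdef, Finset.mem_filter, Finset.mem_product, Finset.mem_Icc]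
    constructor
    · exact fun h => h.2
    · intro h
      have h1 : |(p.1 : ℝ)| ≤ r := by
        nlinarith [sq_abs (p.1 : ℝ), abs_nonneg (p.1 : ℝ), sq_nonneg ((p.2 : ℝ))]
      have h2 : |(p.2 : ℝ)| ≤ r := by
        nlinarith [sq_abs (p.2 : ℝ), abs_nonneg (p.2 : ℝ), sq_nonneg ((p.1 : ℝ))]
      have hc : r ≤ (⌈r⌉ : ℝ) := Int.le_ceil r
      have b1 : -(⌈r⌉ : ℝ) ≤ (p.1 : ℝ) := by nlinarith [neg_abs_le (p.1:ℝ)]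
      have b2 : (p.1 : ℝ) ≤ (⌈r⌉ : ℝ) := by nlinarith [le_abs_self (p.1:ℝ)]
      have b3 : -(⌈r⌉ : ℝ) ≤ (p.2 : ℝ) := by nlinarith [neg_abs_le (p.2:ℝ)]
      have b4 : (p.2 : ℝ) ≤ (⌈r⌉ : ℝ) := by nlinarith [le_abs_self (p.2:ℝ)]
      exact ⟨⟨⟨by exact_mod_cast b1, by exact_mod_cast b2⟩,
        by exact_mod_cast b3, by exact_mod_cast b4⟩, h⟩
  -- C r = s.card
  have hC : (C r : ℝ) = (s.card : ℝ) := by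
    have hseteq : {p : ℤ × ℤ | (p.1 : ℝ) ^ 2 + (p.2 : ℝ) ^ 2 ≤ r ^ 2} = ↑s := by
      ext p; simp [hmem p]
    have : C r = Nat.card {p : ℤ × ℤ | (p.1 : ℝ) ^ 2 + (p.2 : ℝ) ^ 2 ≤ r ^ 2} := rfl
    rw [this, hseteq]
    simp [Nat.card_coe_set_eq, Set.ncard_coe_finset]
  -- volume of the union of squares
  have hvolU : volume (⋃ p ∈ s, sqr p) = (s.card : ENNReal) := by
    rw [measure_biUnion_finset ?_ (fun p _ => sqr_meas p)]
    · simp [sqr_vol]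
    · intro p _ q _ hpq
      exact sqr_disjoint hpq
  -- upper bound
  have hub : (s.card : ℝ) ≤ Real.pi * (r + s2 / 2) ^ 2 := by
    have hsub : (⋃ p ∈ s, sqr p) ⊆ {x : ℝ × ℝ | x.1 ^ 2 + x.2 ^ 2 ≤ (r + s2 / 2) ^ 2} := by
      rintro ⟨x, y⟩ hx
      simp only [Set.mem_iUnion] at hx
      obtain ⟨p, hp, hxp⟩ := hx
      simp only [sqr, Set.mem_prod, Set.mem_Ico] at hxp
      have hpr := (hmem p).1 hp
      have habs := sqrt2_mul_bound hr hpr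
      simp only [Set.mem_setOf_eq]
      have hx1 : |x| ≤ |(p.1 : ℝ)| + 1/2 := by
        rw [abs_le]
        constructor
        · nlinarith [neg_abs_le (p.1 : ℝ), hxp.1.1]
        · nlinarith [le_abs_self (p.1 : ℝ), hxp.1.2]
      have hx2 : |y| ≤ |(p.2 : ℝ)| + 1/2 := by
        rw [abs_le]
        constructor
        · nlinarith [neg_abs_le (p.2 : ℝ), hxp.2.1]
        · nlinarith [le_abs_self (p.2 : ℝ), hxp.2.2]
      have hx1sq : x ^ 2 ≤ (|(p.1 : ℝ)| + 1/2) ^ 2 := by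
        rw [← sq_abs x]; exact pow_le_pow_left₀ (abs_nonneg x) hx1 2
      have hx2sq : y ^ 2 ≤ (|(p.2 : ℝ)| + 1/2) ^ 2 := by
        rw [← sq_abs y]; exact pow_le_pow_left₀ (abs_nonneg y) hx2 2
      nlinarith [hx1sq, hx2sq, sq_abs (p.1 : ℝ), sq_abs (p.2 : ℝ)]
    have : volume (⋃ p ∈ s, sqr p) ≤
        volume {x : ℝ × ℝ | x.1 ^ 2 + x.2 ^ 2 ≤ (r + s2 / 2) ^ 2} := measure_mono hsub
    rw [hvolU, volume_disk _ (by positivity)] at this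
    rw [← ENNReal.ofReal_natCast s.card] at this
    exact (ENNReal.ofReal_le_ofReal_iff (by positivity)).1 this
  -- lower bound (when r ≥ s2/2)
  have hlb : s2 / 2 ≤ r → Real.pi * (r - s2 / 2) ^ 2 ≤ (s.card : ℝ) := by
    intro hr2
    have hsub : {x : ℝ × ℝ | x.1 ^ 2 + x.2 ^ 2 ≤ (r - s2 / 2) ^ 2} ⊆ ⋃ p ∈ s, sqr p := by
      rintro ⟨x, y⟩ hx
      simp only [Set.mem_setOf_eq] at hx
      set q1 : ℤ := ⌊x + 1/2⌋ with hq1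
      set q2 : ℤ := ⌊y + 1/2⌋ with hq2
      have hf1a : (q1 : ℝ) ≤ x + 1/2 := Int.floor_le _
      have hf1b : x + 1/2 - 1 < (q1 : ℝ) := Int.sub_one_lt_floor _
      have hf2a : (q2 : ℝ) ≤ y + 1/2 := Int.floor_le _
      have hf2b : y + 1/2 - 1 < (q2 : ℝ) := Int.sub_one_lt_floor _
      have habs := sqrt2_mul_bound (by linarith) hx
      have hq1abs : |(q1 : ℝ)| ≤ |x| + 1/2 := by
        rw [abs_le]
        constructor
        · nlinarith [neg_abs_le x]
        · nlinarith [le_abs_self x]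
      have hq2abs : |(q2 : ℝ)| ≤ |y| + 1/2 := by
        rw [abs_le]
        constructor
        · nlinarith [neg_abs_le y]
        · nlinarith [le_abs_self y]
      have hqin : (q1, q2) ∈ s := by
        rw [hmem]
        simp only
        have hq1sq : (q1 : ℝ) ^ 2 ≤ (|x| + 1/2) ^ 2 := by
          rw [← sq_abs (q1 : ℝ)]; exact pow_le_pow_left₀ (abs_nonneg _) hq1abs 2
        have hq2sq : (q2 : ℝ) ^ 2 ≤ (|y| + 1/2) ^ 2 := by
          rw [← sq_abs (q2 : ℝ)]; exact pow_le_pow_left₀ (abs_nonneg _) hq2abs 2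
        nlinarith [hq1sq, hq2sq, sq_abs x, sq_abs y]
      apply Set.mem_biUnion hqin
      simp only [sqr, Set.mem_prod, Set.mem_Ico]
      exact ⟨⟨by linarith, by linarith⟩, ⟨by linarith, by linarith⟩⟩
    have : volume {x : ℝ × ℝ | x.1 ^ 2 + x.2 ^ 2 ≤ (r - s2 / 2) ^ 2} ≤
        volume (⋃ p ∈ s, sqr p) := measure_mono hsub
    rw [hvolU, volume_disk _ (by linarith)] at this
    rw [← ENNReal.ofReal_natCast s.card] at this
    exact (ENNReal.ofReal_le_ofReal_iff (by positivity)).1 this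
  -- finish
  have hterm : (0:ℝ) ≤ s2 * Real.pi * r := by positivity
  have hub2 : (s.card : ℝ) ≤ Real.pi * r ^ 2 + s2 * Real.pi * r + Real.pi / 2 := by
    have h1 : (r + s2 / 2) ^ 2 = r ^ 2 + s2 * r + 1/2 := by linear_combination hs2 / 4
    calc (s.card : ℝ) ≤ Real.pi * (r + s2 / 2) ^ 2 := hub
    _ = Real.pi * r ^ 2 + s2 * Real.pi * r + Real.pi / 2 := by rw [h1]; ring
  rw [hC, abs_lt]
  constructor
  · by_cases hr2 : s2 / 2 ≤ r
    · have hlb2 : Real.pi * r ^ 2 - s2 * Real.pi * r + Real.pi / 2 ≤ (s.card : ℝ) := by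
        have h1 : (r - s2 / 2) ^ 2 = r ^ 2 - s2 * r + 1/2 := by linear_combination hs2 / 4
        calc Real.pi * r ^ 2 - s2 * Real.pi * r + Real.pi / 2
            = Real.pi * (r - s2 / 2) ^ 2 := by rw [h1]; ring
        _ ≤ (s.card : ℝ) := hlb hr2
      linarith
    · push_neg at hr2
      have hcard : (0 : ℝ) ≤ s.card := Nat.cast_nonneg _
      have hrsq : r ^ 2 ≤ 1/2 := by nlinarith
      have : Real.pi * r ^ 2 ≤ Real.pi * (1/2) := by
        exact mul_le_mul_of_nonneg_left hrsq hpi.le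
      linarith
  · linarith
end

section
/- For every real number r ≥ √2, the number of lattice points in the closed disk of radius r satisfies the strict lower bound π(r − √2)² < C(r). -/
open MeasureTheory Set
open scoped ENNReal NNReal

/-- The unit square (half-open) centered at a lattice point. -/
def latSq (p : ℤ × ℤ) : Set (ℝ × ℝ) :=
  Ico ((p.1 : ℝ) - 2⁻¹) ((p.1 : ℝ) + 2⁻¹) ×ˢ Ico ((p.2 : ℝ) - 2⁻¹) ((p.2 : ℝ) + 2⁻¹)

lemma latSq_measurable (p : ℤ × ℤ) : MeasurableSet (latSq p) :=
  (measurableSet_Ico).prod measurableSet_Ico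

lemma latSq_volume (p : ℤ × ℤ) : volume (latSq p) = 1 := by
  rw [latSq, Measure.volume_eq_prod, Measure.prod_prod, Real.volume_Ico, Real.volume_Ico]
  norm_num

lemma latSq_disjoint {p q : ℤ × ℤ} (h : p ≠ q) : Disjoint (latSq p) (latSq q) := by
  rw [Set.disjoint_left]
  rintro ⟨x, y⟩ ⟨⟨h1, h2⟩, h3, h4⟩ ⟨⟨h5, h6⟩, h7, h8⟩
  simp only at h1 h2 h3 h4 h5 h6 h7 h8
  apply h
  have e1 : p.1 = q.1 := by
    have h9 : |(p.1 : ℝ) - (q.1 : ℝ)| < 1 := by rw [abs_lt]; constructor <;> linarith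
    have h10 : |p.1 - q.1| < 1 := by
      exact_mod_cast (by push_cast; exact h9 : |((p.1 - q.1 : ℤ) : ℝ)| < 1)
    have := abs_lt.mp h10
    omega
  have e2 : p.2 = q.2 := by
    have h9 : |(p.2 : ℝ) - (q.2 : ℝ)| < 1 := by rw [abs_lt]; constructor <;> linarith
    have h10 : |p.2 - q.2| < 1 := by
      exact_mod_cast (by push_cast; exact h9 : |((p.2 - q.2 : ℤ) : ℝ)| < 1)
    have := abs_lt.mp h10
    omega
  exact Prod.ext e1 e2

lemma disk_volume (s : ℝ) (hs : 0 ≤ s) :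
    volume {q : ℝ × ℝ | q.1 ^ 2 + q.2 ^ 2 ≤ s ^ 2} = ENNReal.ofReal (Real.pi * s ^ 2) := by
  have hmeas : MeasurableSet {q : ℝ × ℝ | q.1 ^ 2 + q.2 ^ 2 ≤ s ^ 2} := by
    apply measurableSet_le <;> fun_prop
  rw [← Complex.volume_preserving_equiv_real_prod.measure_preimage hmeas.nullMeasurableSet]
  have hset : Complex.measurableEquivRealProd ⁻¹' {q : ℝ × ℝ | q.1 ^ 2 + q.2 ^ 2 ≤ s ^ 2} =
      Metric.closedBall (0 : ℂ) s := by
    ext z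
    simp only [Set.mem_preimage, Complex.measurableEquivRealProd_apply, Set.mem_setOf_eq,
      Metric.mem_closedBall, dist_zero_right]
    have h1 := Complex.sq_norm z
    rw [Complex.normSq_apply] at h1
    constructor
    · intro h
      nlinarith [norm_nonneg z]
    · intro h
      nlinarith [norm_nonneg z]
  rw [hset, Complex.volume_closedBall]
  rw [ENNReal.ofReal_mul Real.pi_pos.le, ← ENNReal.ofReal_pow hs, mul_comm]
  congr 1
  rw [show Real.pi = (NNReal.pi : ℝ) from rfl, ENNReal.ofReal_coe_nnreal]

lemma key_ineq (x y u v s c : ℝ) (hs : 0 ≤ s) (hc : 0 ≤ c) (hc2 : c ^ 2 = 2)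
    (hq : x ^ 2 + y ^ 2 ≤ s ^ 2) (hu : u ^ 2 ≤ 4⁻¹) (hv : v ^ 2 ≤ 4⁻¹) :
    (x + u) ^ 2 + (y + v) ^ 2 ≤ (s + c / 2) ^ 2 := by
  have habs : (x * u + y * v) ^ 2 ≤ s ^ 2 * (1 / 2) := by
    nlinarith [sq_nonneg (x * v - y * u),
      mul_nonneg (sub_nonneg.mpr hq) (add_nonneg (sq_nonneg u) (sq_nonneg v)),
      mul_nonneg (sq_nonneg s) (by linarith : (0:ℝ) ≤ 1 / 2 - (u ^ 2 + v ^ 2))]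
  have ht : 2 * (x * u + y * v) ≤ c * s := by
    nlinarith [habs, mul_nonneg hc hs, sq_nonneg (2 * (x * u + y * v) - c * s)]
  nlinarith [hq, ht, hu, hv, hc2]

theorem gauss_circle_lower_bound (r : ℝ) (hr : Real.sqrt 2 ≤ r) :
    Real.pi * (r - Real.sqrt 2) ^ 2 < (C r : ℝ) := by
  have h2 : (0:ℝ) < Real.sqrt 2 := Real.sqrt_pos.mpr (by norm_num)
  have hsq2 : Real.sqrt 2 ^ 2 = 2 := Real.sq_sqrt (by norm_num)
  have hr0 : (0:ℝ) ≤ r := le_trans h2.le hr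
  set s : ℝ := r - Real.sqrt 2 / 2 with hs_def
  have hs0 : 0 < s := by rw [hs_def]; linarith
  -- the set of lattice points is finite
  set S : Set (ℤ × ℤ) := {p | (p.1 : ℝ) ^ 2 + (p.2 : ℝ) ^ 2 ≤ r ^ 2} with hS_def
  have hfin : S.Finite := by
    apply Set.Finite.subset ((Set.finite_Icc (-⌈r⌉) ⌈r⌉).prod (Set.finite_Icc (-⌈r⌉) ⌈r⌉))
    rintro ⟨a, b⟩ hab
    simp only [hS_def, Set.mem_setOf_eq] at hab
    have hc : r ≤ (⌈r⌉ : ℝ) := Int.le_ceil r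
    have ha1 : -(⌈r⌉:ℝ) ≤ (a:ℝ) := by nlinarith [sq_nonneg ((b:ℝ))]
    have ha2 : (a:ℝ) ≤ (⌈r⌉:ℝ) := by nlinarith [sq_nonneg ((b:ℝ))]
    have hb1 : -(⌈r⌉:ℝ) ≤ (b:ℝ) := by nlinarith [sq_nonneg ((a:ℝ))]
    have hb2 : (b:ℝ) ≤ (⌈r⌉:ℝ) := by nlinarith [sq_nonneg ((a:ℝ))]
    exact ⟨⟨by exact_mod_cast ha1, by exact_mod_cast ha2⟩,
      ⟨by exact_mod_cast hb1, by exact_mod_cast hb2⟩⟩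
  -- C r equals the card of the finset
  have hcard : C r = hfin.toFinset.card := by
    rw [show C r = Nat.card ↑S from rfl, Nat.card_coe_set_eq,
      Set.ncard_eq_toFinset_card _ hfin]
  -- the disk of radius s is covered by unit squares centered at points of S
  have hcover : {q : ℝ × ℝ | q.1 ^ 2 + q.2 ^ 2 ≤ s ^ 2} ⊆ ⋃ p ∈ hfin.toFinset, latSq p := by
    rintro ⟨x, y⟩ hq
    simp only [Set.mem_setOf_eq] at hq
    have hx1 : (round x : ℝ) - 2⁻¹ ≤ x := by
      have := Int.floor_le (x + 1/2)
      rw [round_eq]; push_cast at this ⊢; linarith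
    have hx2 : x < (round x : ℝ) + 2⁻¹ := by
      have := Int.lt_floor_add_one (x + 1/2)
      rw [round_eq]; push_cast at this ⊢; linarith
    have hy1 : (round y : ℝ) - 2⁻¹ ≤ y := by
      have := Int.floor_le (y + 1/2)
      rw [round_eq]; push_cast at this ⊢; linarith
    have hy2 : y < (round y : ℝ) + 2⁻¹ := by
      have := Int.lt_floor_add_one (y + 1/2)
      rw [round_eq]; push_cast at this ⊢; linarith
    have hpS : (round x, round y) ∈ S := by
      simp only [hS_def, Set.mem_setOf_eq]
      have hkey := key_ineq x y ((round x : ℝ) - x) ((round y : ℝ) - y) s (Real.sqrt 2)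
        hs0.le h2.le hsq2 hq (by nlinarith) (by nlinarith)
      have hre : r = s + Real.sqrt 2 / 2 := by rw [hs_def]; ring
      rw [hre]
      calc ((round x : ℝ)) ^ 2 + ((round y : ℝ)) ^ 2
          = (x + ((round x : ℝ) - x)) ^ 2 + (y + ((round y : ℝ) - y)) ^ 2 := by ring
        _ ≤ (s + Real.sqrt 2 / 2) ^ 2 := hkey
    exact Set.mem_biUnion (hfin.mem_toFinset.mpr hpS) ⟨⟨hx1, hx2⟩, hy1, hy2⟩
  -- measure estimate
  have hvol : ENNReal.ofReal (Real.pi * s ^ 2) ≤ (hfin.toFinset.card : ℝ≥0∞) := by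
    calc ENNReal.ofReal (Real.pi * s ^ 2)
        = volume {q : ℝ × ℝ | q.1 ^ 2 + q.2 ^ 2 ≤ s ^ 2} := (disk_volume s hs0.le).symm
      _ ≤ volume (⋃ p ∈ hfin.toFinset, latSq p) := measure_mono hcover
      _ = ∑ p ∈ hfin.toFinset, volume (latSq p) :=
          measure_biUnion_finset (fun a _ b _ hab => latSq_disjoint hab)
            (fun p _ => latSq_measurable p)
      _ = (hfin.toFinset.card : ℝ≥0∞) := by simp [latSq_volume]
  have hreal : Real.pi * s ^ 2 ≤ (hfin.toFinset.card : ℝ) := by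
    rw [← ENNReal.ofReal_natCast] at hvol
    exact (ENNReal.ofReal_le_ofReal_iff (by positivity)).mp hvol
  have hlt : Real.pi * (r - Real.sqrt 2) ^ 2 < Real.pi * s ^ 2 := by
    apply mul_lt_mul_of_pos_left _ Real.pi_pos
    apply pow_lt_pow_left₀ _ (by linarith) (by norm_num)
    rw [hs_def]; linarith
  rw [hcard]
  linarith
end

section
/- (Gauss, 1834) The function x ↦ C(√x) − πx is O(√x) as x → ∞; that is, there exists a constant K > 0 such that for all sufficiently large real x, |C(√x) − πx| ≤ K·√x. -/
open MeasureTheory Set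
open scoped ENNReal NNReal

namespace GaussAux

/-- The half-open unit square with corner at the lattice point `p`. -/
def sq (p : ℤ × ℤ) : Set ℂ :=
  Complex.measurableEquivRealProd ⁻¹'
    (Set.Ico (p.1 : ℝ) (p.1 + 1) ×ˢ Set.Ico (p.2 : ℝ) (p.2 + 1))

lemma mem_sq {p : ℤ × ℤ} {z : ℂ} :
    z ∈ sq p ↔ ((p.1 : ℝ) ≤ z.re ∧ z.re < p.1 + 1) ∧ ((p.2 : ℝ) ≤ z.im ∧ z.im < p.2 + 1) := by
  simp [sq, Complex.measurableEquivRealProd_apply, Set.mem_Ico]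

lemma measurableSet_sq (p : ℤ × ℤ) : MeasurableSet (sq p) :=
  (measurableSet_Ico.prod measurableSet_Ico).preimage
    (MeasurableEquiv.measurable _)

lemma volume_sq (p : ℤ × ℤ) : volume (sq p) = 1 := by
  rw [sq, Complex.volume_preserving_equiv_real_prod.measure_preimage
    (measurableSet_Ico.prod measurableSet_Ico).nullMeasurableSet]
  rw [Measure.volume_eq_prod, Measure.prod_prod, Real.volume_Ico, Real.volume_Ico]
  simp

lemma sq_disjoint {p q : ℤ × ℤ} (h : p ≠ q) : Disjoint (sq p) (sq q) := by
  rw [Set.disjoint_left]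
  intro z hp hq
  rw [mem_sq] at hp hq
  apply h
  have h1 : p.1 = ⌊z.re⌋ := (Int.floor_eq_iff.mpr hp.1).symm
  have h2 : q.1 = ⌊z.re⌋ := (Int.floor_eq_iff.mpr hq.1).symm
  have h3 : p.2 = ⌊z.im⌋ := (Int.floor_eq_iff.mpr hp.2).symm
  have h4 : q.2 = ⌊z.im⌋ := (Int.floor_eq_iff.mpr hq.2).symm
  exact Prod.ext (h1.trans h2.symm) (h3.trans h4.symm)

/-- The lattice point as a complex number. -/
def lp (p : ℤ × ℤ) : ℂ := ⟨(p.1 : ℝ), (p.2 : ℝ)⟩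

lemma abs_sub_lp_le {p : ℤ × ℤ} {z : ℂ} (hz : z ∈ sq p) :
    ‖z - lp p‖ ≤ Real.sqrt 2 := by
  rw [mem_sq] at hz
  rw [Complex.norm_def, Complex.normSq_apply]
  apply Real.sqrt_le_sqrt
  have hre : (z - lp p).re = z.re - p.1 := rfl
  have him : (z - lp p).im = z.im - p.2 := rfl
  rw [hre, him]
  nlinarith [hz.1.1, hz.1.2, hz.2.1, hz.2.2]

lemma normSq_lp (p : ℤ × ℤ) : Complex.normSq (lp p) = (p.1 : ℝ) ^ 2 + (p.2 : ℝ) ^ 2 := by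
  rw [lp, Complex.normSq_mk]; ring

/-- The set of lattice points in the disk of radius `r`. -/
def S (r : ℝ) : Set (ℤ × ℤ) := {p | (p.1 : ℝ) ^ 2 + (p.2 : ℝ) ^ 2 ≤ r ^ 2}

lemma S_finite (r : ℝ) : (S r).Finite := by
  apply Set.Finite.subset (Set.finite_Icc (-(⌈|r|⌉), -(⌈|r|⌉)) (⌈|r|⌉, ⌈|r|⌉))
  intro p hp
  have hp' : (p.1 : ℝ) ^ 2 + (p.2 : ℝ) ^ 2 ≤ r ^ 2 := hp
  have h1 : |(p.1 : ℝ)| ≤ |r| := by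
    rw [← Real.sqrt_sq_eq_abs, ← Real.sqrt_sq_eq_abs]
    exact Real.sqrt_le_sqrt (by nlinarith [sq_nonneg (p.2 : ℝ)])
  have h2 : |(p.2 : ℝ)| ≤ |r| := by
    rw [← Real.sqrt_sq_eq_abs, ← Real.sqrt_sq_eq_abs]
    exact Real.sqrt_le_sqrt (by nlinarith [sq_nonneg (p.1 : ℝ)])
  have hr1 : |r| ≤ (⌈|r|⌉ : ℝ) := Int.le_ceil _
  have k1 : |p.1| ≤ ⌈|r|⌉ := by exact_mod_cast h1.trans hr1
  have k2 : |p.2| ≤ ⌈|r|⌉ := by exact_mod_cast h2.trans hr1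
  rw [abs_le] at k1 k2
  exact Set.mem_Icc.mpr ⟨⟨k1.1, k2.1⟩, ⟨k1.2, k2.2⟩⟩

lemma card_eq (r : ℝ) : (C r : ℝ≥0∞) = volume (⋃ p ∈ (S_finite r).toFinset, sq p) := by
  have hd : Set.PairwiseDisjoint (↑(S_finite r).toFinset) sq := by
    intro p _ q _ hpq
    exact sq_disjoint hpq
  rw [measure_biUnion_finset hd (fun p _ => measurableSet_sq p)]
  simp only [volume_sq, Finset.sum_const, nsmul_eq_mul, mul_one]
  congr 1
  have h1 : C r = (S r).ncard := Nat.card_coe_set_eq (S r)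
  rw [h1, Set.ncard_eq_toFinset_card _ (S_finite r)]

lemma union_subset (r : ℝ) (hr : 0 ≤ r) :
    (⋃ p ∈ (S_finite r).toFinset, sq p) ⊆ Metric.closedBall 0 (r + Real.sqrt 2) := by
  intro z hz
  simp only [Set.mem_iUnion, Set.Finite.mem_toFinset] at hz
  obtain ⟨p, hp, hzp⟩ := hz
  rw [Metric.mem_closedBall, dist_zero_right]
  have h1 : ‖lp p‖ ≤ r := by
    have h2 : (‖lp p‖) ^ 2 ≤ r ^ 2 := by
      rw [Complex.sq_norm, normSq_lp]; exact hp
    nlinarith [norm_nonneg (lp p)]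
  calc ‖z‖ ≤ ‖lp p‖ + ‖z - lp p‖ := by
        simpa using norm_add_le (lp p) (z - lp p)
    _ ≤ r + Real.sqrt 2 := add_le_add h1 (abs_sub_lp_le hzp)

lemma subset_union (r : ℝ) :
    Metric.closedBall 0 (r - Real.sqrt 2) ⊆ (⋃ p ∈ (S_finite r).toFinset, sq p) := by
  intro z hz
  rw [Metric.mem_closedBall, dist_zero_right] at hz
  set p : ℤ × ℤ := (⌊z.re⌋, ⌊z.im⌋) with hp
  have hzp : z ∈ sq p := by
    rw [mem_sq]
    exact ⟨⟨Int.floor_le _, Int.lt_floor_add_one _⟩, ⟨Int.floor_le _, Int.lt_floor_add_one _⟩⟩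
  have habs : ‖z - lp p‖ ≤ Real.sqrt 2 := abs_sub_lp_le hzp
  have hmem : p ∈ S r := by
    show (p.1 : ℝ) ^ 2 + (p.2 : ℝ) ^ 2 ≤ r ^ 2
    have h1 : ‖lp p‖ ≤ r := by
      calc ‖lp p‖ ≤ ‖z‖ + ‖lp p - z‖ := by
            simpa using norm_add_le z (lp p - z)
        _ ≤ (r - Real.sqrt 2) + Real.sqrt 2 := by
            refine add_le_add hz ?_
            rw [← norm_neg, neg_sub]; exact habs
        _ = r := by ring
    have h2 : (‖lp p‖) ^ 2 ≤ r ^ 2 := by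
      have := norm_nonneg (lp p)
      nlinarith
    rw [Complex.sq_norm, normSq_lp] at h2
    exact h2
  simp only [Set.mem_iUnion, Set.Finite.mem_toFinset]
  exact ⟨p, hmem, hzp⟩

lemma upper (r : ℝ) (hr : 0 ≤ r) : (C r : ℝ) ≤ Real.pi * (r + Real.sqrt 2) ^ 2 := by
  have h := measure_mono (μ := (volume : Measure ℂ)) (union_subset r hr)
  rw [← card_eq r, Complex.volume_closedBall] at h
  have hs : 0 ≤ r + Real.sqrt 2 := by positivity
  have hv : (ENNReal.ofReal (r + Real.sqrt 2)) ^ 2 * (NNReal.pi : ℝ≥0∞)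
      = ENNReal.ofReal (Real.pi * (r + Real.sqrt 2) ^ 2) := by
    rw [← ENNReal.ofReal_pow hs, ← ENNReal.ofReal_coe_nnreal]
    rw [← ENNReal.ofReal_mul (by positivity)]
    rw [mul_comm]
    norm_num [NNReal.coe_real_pi]
  rw [hv] at h
  have h2 : ENNReal.ofReal ((C r : ℝ)) ≤ ENNReal.ofReal (Real.pi * (r + Real.sqrt 2) ^ 2) := by
    rwa [ENNReal.ofReal_natCast]
  exact (ENNReal.ofReal_le_ofReal_iff (by positivity)).mp h2

lemma lower (r : ℝ) (hr : Real.sqrt 2 ≤ r) : Real.pi * (r - Real.sqrt 2) ^ 2 ≤ (C r : ℝ) := by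
  have h := measure_mono (μ := (volume : Measure ℂ)) (subset_union r)
  rw [← card_eq r, Complex.volume_closedBall] at h
  have hs : 0 ≤ r - Real.sqrt 2 := by linarith
  have hv : (ENNReal.ofReal (r - Real.sqrt 2)) ^ 2 * (NNReal.pi : ℝ≥0∞)
      = ENNReal.ofReal (Real.pi * (r - Real.sqrt 2) ^ 2) := by
    rw [← ENNReal.ofReal_pow hs, ← ENNReal.ofReal_coe_nnreal]
    rw [← ENNReal.ofReal_mul (by positivity)]
    rw [mul_comm]
    norm_num [NNReal.coe_real_pi]
  rw [hv] at h
  have h2 : ENNReal.ofReal (Real.pi * (r - Real.sqrt 2) ^ 2) ≤ ENNReal.ofReal ((C r : ℝ)) := by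
    rwa [ENNReal.ofReal_natCast]
  exact (ENNReal.ofReal_le_ofReal_iff (by positivity)).mp h2

end GaussAux

theorem gauss_circle_error_bigO_gauss :
    ∃ K : ℝ, 0 < K ∧ ∀ᶠ x : ℝ in Filter.atTop,
      |(C (Real.sqrt x) : ℝ) - Real.pi * x| ≤ K * Real.sqrt x := by
  refine ⟨24, by norm_num, ?_⟩
  filter_upwards [Filter.eventually_ge_atTop (2 : ℝ)] with x hx
  set r := Real.sqrt x with hrdef
  have hx0 : (0 : ℝ) ≤ x := by linarith
  have hr2 : r ^ 2 = x := Real.sq_sqrt hx0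
  have hs2 : Real.sqrt 2 ≤ r := Real.sqrt_le_sqrt hx
  have hsq2 : Real.sqrt 2 ^ 2 = 2 := Real.sq_sqrt (by norm_num)
  have hsqnn : (0:ℝ) ≤ Real.sqrt 2 := Real.sqrt_nonneg 2
  have hs2' : (1 : ℝ) ≤ Real.sqrt 2 := by nlinarith
  have hs2'' : Real.sqrt 2 ≤ 2 := by nlinarith
  have hr1 : (1 : ℝ) ≤ r := le_trans hs2' hs2
  have hpi : Real.pi ≤ 4 := Real.pi_le_four
  have hpi0 : 0 < Real.pi := Real.pi_pos
  have hup := GaussAux.upper r (by linarith)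
  have hlo := GaussAux.lower r hs2
  rw [abs_le]
  constructor
  · -- -24 r ≤ C - π x
    have : Real.pi * (r - Real.sqrt 2) ^ 2 = Real.pi * r ^ 2 -
        Real.pi * (2 * Real.sqrt 2 * r - 2) := by
      have : Real.sqrt 2 ^ 2 = 2 := Real.sq_sqrt (by norm_num)
      nlinarith [this]
    rw [this, hr2] at hlo
    have hb : Real.pi * (2 * Real.sqrt 2 * r - 2) ≤ 24 * r := by
      nlinarith [Real.sqrt_nonneg 2]
    linarith
  · -- C - π x ≤ 24 r
    have : Real.pi * (r + Real.sqrt 2) ^ 2 = Real.pi * r ^ 2 +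
        Real.pi * (2 * Real.sqrt 2 * r + 2) := by
      have : Real.sqrt 2 ^ 2 = 2 := Real.sq_sqrt (by norm_num)
      nlinarith [this]
    rw [this, hr2] at hup
    have hb : Real.pi * (2 * Real.sqrt 2 * r + 2) ≤ 24 * r := by
      nlinarith [Real.sqrt_nonneg 2]
    linarith
end
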